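/- arXiv:1702.01822 — 4 statements merged into one kernel-verified Lean document; each statement's English description precedes it below -/
import Mathlib

section
/- Let A, B be partitions of d with ν(A) + ν(B) = d − t for some t ≥ 1. Then there exist permutations α realizing A and β realizing B (on a set of d elements) such that ν(αβ) = d − t. -/
/-- The cycle structure of a permutation of `Fin d`: the multiset of lengths of the cycles
in its cyclic decomposition, including a part `1` for each fixed point. -/
def cycleStructure {d : ℕ} (σ : Equiv.Perm (Fin d)) : Multiset ℕ :=
  σ.cycleType + Multiset.replicate (d - σ.cycleType.sum) 1

/-- A permutation realizes a partition `D` of `d` if its cycle structure equals `D`. -/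
def Realizes {d : ℕ} (σ : Equiv.Perm (Fin d)) (D : Nat.Partition d) : Prop :=
  cycleStructure σ = D.parts

/-- The defect of a partition: the sum of (part − 1) over its parts. -/
def defect {d : ℕ} (D : Nat.Partition d) : ℕ :=
  (D.parts.map (· - 1)).sum

/-- The defect of a permutation: the sum of (part − 1) over its cycle structure,
i.e. `d` minus the number of its cycles (fixed points counted as 1-cycles). -/
def permDefect {d : ℕ} (σ : Equiv.Perm (Fin d)) : ℕ :=
  ((cycleStructure σ).map (· - 1)).sum



open Equiv Equiv.Perm Multiset

namespace Stmt1Aux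

/-- ν of a multiset: sum of (part - 1). -/
def nus (M : Multiset ℕ) : ℕ := (M.map (· - 1)).sum

lemma nus_add_card {A : Multiset ℕ} (hA : ∀ x ∈ A, 1 ≤ x) :
    nus A + Multiset.card A = A.sum := by
  induction A using Multiset.induction with
  | empty => simp [nus]
  | cons a s ih =>
    have h1 : 1 ≤ a := hA a (mem_cons_self _ _)
    have h2 := ih (fun x hx => hA x (mem_cons_of_mem hx))
    simp only [nus, Multiset.map_cons, Multiset.sum_cons, Multiset.card_cons] at *
    omega

lemma nus_eq_zero {A : Multiset ℕ} (hA : ∀ x ∈ A, 2 ≤ x) (h : nus A = 0) : A = 0 := by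
  by_contra h0
  obtain ⟨a, ha⟩ := Multiset.exists_mem_of_ne_zero h0
  have : a - 1 ≤ nus A :=
    Multiset.single_le_sum (fun x _ => Nat.zero_le x) _ (Multiset.mem_map_of_mem _ ha)
  have := hA a ha
  omega

lemma one_le_nus {A : Multiset ℕ} (hA : ∀ x ∈ A, 2 ≤ x) (h0 : A ≠ 0) : 1 ≤ nus A := by
  rcases Nat.eq_zero_or_pos (nus A) with h | h
  · exact absurd (nus_eq_zero hA h) h0
  · exact h

variable {X : Type*} [Fintype X] [DecidableEq X]

/-- Extending a cycle by splicing in a fixed point via a swap. -/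
lemma isCycle_mul_swap {c : Perm X} (hc : c.IsCycle) {x y : X} (hx : c x = x)
    (hy : y ∈ c.support) :
    (c * Equiv.swap x y).IsCycle ∧ (c * Equiv.swap x y).support = insert x c.support := by
  classical
  have hcy : c y ≠ y := mem_support.mp hy
  have hxy : x ≠ y := by rintro rfl; exact hcy hx
  have hcyx : c y ≠ x := fun h => hxy (c.injective (h.trans hx.symm)).symm
  have gx : (c * Equiv.swap x y) x = c y := by
    simp [Equiv.Perm.mul_apply, Equiv.swap_apply_left]
  have gy : (c * Equiv.swap x y) y = x := by
    simp [Equiv.Perm.mul_apply, Equiv.swap_apply_right, hx]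
  have gz : ∀ z, z ≠ x → z ≠ y → (c * Equiv.swap x y) z = c z := by
    intro z h1 h2
    simp [Equiv.Perm.mul_apply, Equiv.swap_apply_of_ne_of_ne h1 h2]
  have hsupp : (c * Equiv.swap x y).support = insert x c.support := by
    ext z
    rcases eq_or_ne z x with rfl | hzx
    · simp [mem_support, gx, hcyx]
    rcases eq_or_ne z y with rfl | hzy
    · simp [mem_support, gy, hcy, hzx, hxy]
    · rw [mem_support, gz z hzx hzy, Finset.mem_insert, ← mem_support]
      simp [hzx]
  refine ⟨⟨y, by rw [gy]; exact hxy, ?_⟩, hsupp⟩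
  intro w hw
  rcases eq_or_ne w y with rfl | hwy
  · exact SameCycle.refl _ _
  rcases eq_or_ne w x with rfl | hwx
  · exact ⟨1, by simpa using gy⟩
  have hcw : c w ≠ w := by rw [← gz w hwx hwy]; exact hw
  have hex : ∃ i : ℕ, (c ^ i) y = w := hc.exists_pow_eq hcy hcw
  obtain ⟨i, hiw, hmin⟩ : ∃ i, (c ^ i) y = w ∧ ∀ j < i, (c ^ j) y ≠ w :=
    ⟨Nat.find hex, Nat.find_spec hex, fun j hj => Nat.find_min hex hj⟩
  have hi1 : 1 ≤ i := by
    rcases Nat.eq_zero_or_pos i with h0 | h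
    · exfalso; apply hwy; rw [← hiw, h0, pow_zero]; rfl
    · exact h
  have hQ : ∀ j, 1 ≤ j → j ≤ i → (c ^ j) y ≠ y := by
    intro j h1 h2 hj
    apply hmin (i - j) (by omega)
    have h3 : (c ^ (i - j)) ((c ^ j) y) = (c ^ i) y := by
      rw [← Equiv.Perm.mul_apply, ← pow_add, Nat.sub_add_cancel h2]
    rw [hj] at h3
    rw [h3, hiw]
  have hR : ∀ j, 1 ≤ j → j ≤ i → ((c * Equiv.swap x y) ^ (j + 1)) y = (c ^ j) y := by
    intro j h1 h2
    induction j with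
    | zero => omega
    | succ j ih =>
      rcases Nat.eq_zero_or_pos j with rfl | hj
      · show ((c * Equiv.swap x y) ^ 2) y = (c ^ 1) y
        rw [pow_one]
        rw [pow_two, Equiv.Perm.mul_apply, gy, gx]
      · have ihj := ih hj (by omega)
        have hne_y : (c ^ j) y ≠ y := hQ j hj (by omega)
        have hne_x : (c ^ j) y ≠ x := by
          intro h
          apply hne_y
          have hfix : c ((c ^ j) y) = (c ^ j) y := by rw [h, hx]
          have hcomm : (c ^ j) (c y) = c ((c ^ j) y) := by
            rw [← Equiv.Perm.mul_apply, ← Equiv.Perm.mul_apply, ← pow_succ, ← pow_succ']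
          exact absurd ((c ^ j).injective (hcomm.trans hfix)) hcy
        have hstep : c ((c ^ j) y) ≠ (c ^ j) y := by
          intro h
          have hcomm : (c ^ j) (c y) = c ((c ^ j) y) := by
            rw [← Equiv.Perm.mul_apply, ← Equiv.Perm.mul_apply, ← pow_succ, ← pow_succ']
          exact hcy ((c ^ j).injective (hcomm.trans (h.trans rfl)))
        show ((c * Equiv.swap x y) ^ (j + 1 + 1)) y = (c ^ (j + 1)) y
        rw [pow_succ' (c * Equiv.swap x y), Equiv.Perm.mul_apply, ihj,
          gz _ hne_x hne_y, pow_succ' c, Equiv.Perm.mul_apply]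
  exact ⟨((i + 1 : ℕ) : ℤ), by rw [zpow_natCast, hR i hi1 le_rfl, hiw]⟩

lemma cycleType_mul_swap_fixed {σ : Perm X} {x y : X} (hx : σ x = x) (hy : σ y = y)
    (hxy : x ≠ y) :
    (σ * Equiv.swap x y).cycleType = 2 ::ₘ σ.cycleType := by
  have hd : Equiv.Perm.Disjoint σ (Equiv.swap x y) := by
    intro z
    rcases eq_or_ne z x with rfl | hzx
    · left; exact hx
    rcases eq_or_ne z y with rfl | hzy
    · left; exact hy
    · right; exact Equiv.swap_apply_of_ne_of_ne hzx hzy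
  rw [hd.cycleType_mul, (Equiv.Perm.isCycle_swap hxy).cycleType,
    Equiv.Perm.card_support_swap hxy]
  rw [add_comm, Multiset.singleton_add]

lemma cycleType_mul_swap_moved {σ : Perm X} {x y : X} (hx : σ x = x) (hy : σ y ≠ y) :
    (σ.cycleOf y).support.card ∈ σ.cycleType ∧
    (σ * Equiv.swap x y).cycleType =
      ((σ.cycleOf y).support.card + 1) ::ₘ
        σ.cycleType.erase ((σ.cycleOf y).support.card) := by
  classical
  set c := σ.cycleOf y with hc
  have hmemf : c ∈ σ.cycleFactorsFinset :=
    cycleOf_mem_cycleFactorsFinset_iff.mpr (mem_support.mpr hy)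
  have hcyc : c.IsCycle := (mem_cycleFactorsFinset_iff.mp hmemf).1
  have hd : Equiv.Perm.Disjoint (σ * c⁻¹) c :=
    disjoint_mul_inv_of_mem_cycleFactorsFinset hmemf
  have hσ : σ = (σ * c⁻¹) * c := by rw [inv_mul_cancel_right]
  have hcx : c x = x := by
    rw [hc, Equiv.Perm.cycleOf_apply]
    split <;> simp [hx]
  have hyc : y ∈ c.support := by
    rw [hc, Equiv.Perm.mem_support_cycleOf_iff]
    exact ⟨SameCycle.refl _ _, mem_support.mpr hy⟩
  obtain ⟨hgc, hgs⟩ := isCycle_mul_swap hcyc hcx hyc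
  have hxse : x ∉ c.support := fun h => (mem_support.mp h) hcx
  have hρx : (σ * c⁻¹) x = x := by
    have h1 : c⁻¹ x = x := by
      have := (Equiv.symm_apply_apply c x : c⁻¹ (c x) = x)
      rwa [hcx] at this
    rw [Equiv.Perm.mul_apply, h1, hx]
  have hd2 : Equiv.Perm.Disjoint (σ * c⁻¹) (c * Equiv.swap x y) := by
    intro z
    rcases eq_or_ne z x with rfl | hzx
    · left; exact hρx
    rcases hd z with h | h
    · left; exact h
    · right
      have hz : z ∉ (c * Equiv.swap x y).support := by
        rw [hgs, Finset.mem_insert]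
        push_neg
        exact ⟨hzx, fun hz => (mem_support.mp hz) h⟩
      exact notMem_support.mp hz
  have hct : (σ * Equiv.swap x y).cycleType =
      (σ * c⁻¹).cycleType + {c.support.card + 1} := by
    have key : σ * Equiv.swap x y = (σ * c⁻¹) * (c * Equiv.swap x y) := by
      conv_lhs => rw [hσ]
      rw [mul_assoc]
    rw [key, hd2.cycleType_mul, hgc.cycleType, hgs, Finset.card_insert_of_notMem hxse]
  have hσt : σ.cycleType = (σ * c⁻¹).cycleType + {c.support.card} := by
    conv_lhs => rw [hσ]
    rw [hd.cycleType_mul, hcyc.cycleType]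
  constructor
  · rw [hσt]; simp
  · rw [hct, hσt]
    have h1 : (σ * c⁻¹).cycleType + ({c.support.card} : Multiset ℕ)
        = c.support.card ::ₘ (σ * c⁻¹).cycleType := by
      rw [add_comm, Multiset.singleton_add]
    rw [h1, Multiset.erase_cons_head, add_comm, Multiset.singleton_add]

/-- nu computation: splicing increases nu by 1, case fixed. -/
lemma nus_swap_fixed {σ : Perm X} {x y : X} (hx : σ x = x) (hy : σ y = y) (hxy : x ≠ y) :
    nus (σ * Equiv.swap x y).cycleType = nus σ.cycleType + 1 := by
  rw [cycleType_mul_swap_fixed hx hy hxy]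
  simp [nus]
  omega

lemma nus_swap_moved {σ : Perm X} {x y : X} (hx : σ x = x) (hy : σ y ≠ y) :
    nus (σ * Equiv.swap x y).cycleType = nus σ.cycleType + 1 := by
  obtain ⟨hmem, hct⟩ := cycleType_mul_swap_moved hx hy
  set a := (σ.cycleOf y).support.card with ha
  have ha2 : 2 ≤ a := Equiv.Perm.two_le_of_mem_cycleType hmem
  have hsplit : σ.cycleType = a ::ₘ σ.cycleType.erase a := (Multiset.cons_erase hmem).symm
  rw [hct]
  conv_rhs => rw [hsplit]
  simp only [nus, Multiset.map_cons, Multiset.sum_cons]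
  omega

end Stmt1Aux
namespace Stmt1Aux

/-- `Fin n` as the subtype of `Fin (n+1)` of elements with value `< n`. -/
def finEquiv (n : ℕ) : Fin n ≃ {i : Fin (n + 1) // (i : ℕ) < n} where
  toFun i := ⟨i.castSucc, by simp⟩
  invFun j := ⟨j.1, j.2⟩
  left_inv i := rfl
  right_inv j := by ext; simp [Fin.castSucc]

/-- The goal statement of the key induction. -/
def Goal (n t : ℕ) (A B : Multiset ℕ) : Prop :=
  ∃ α β : Equiv.Perm (Fin n), α.cycleType = A ∧ β.cycleType = B ∧
    nus (α * β).cycleType + t = n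

lemma Goal.symm {n t : ℕ} {A B : Multiset ℕ} (h : Goal n t A B) : Goal n t B A := by
  obtain ⟨α, β, hα, hβ, hn⟩ := h
  refine ⟨β, α, hβ, hα, ?_⟩
  have : β * α = α⁻¹ * (α * β) * α⁻¹⁻¹ := by group
  rw [this, Equiv.Perm.cycleType_conj]
  exact hn

lemma step {n t : ℕ} {A B : Multiset ℕ} {a : ℕ} (ha : a ∈ A) (ha2 : 2 ≤ a)
    (hAs : A.sum ≤ n + 1)
    (prev : Goal n t (if a = 2 then A.erase a else (a - 1) ::ₘ A.erase a) B) :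
    Goal (n + 1) t A B := by
  classical
  obtain ⟨α', β', hα', hβ', hn⟩ := prev
  set e := finEquiv n
  set σ := α'.extendDomain e with hσdef
  set τ := β'.extendDomain e with hτdef
  set x : Fin (n + 1) := Fin.last n with hxdef
  have hxp : ¬ ((x : ℕ) < n) := by simp [hxdef]
  have hσx : σ x = x := Equiv.Perm.extendDomain_apply_not_subtype _ _ hxp
  have hτx : τ x = x := Equiv.Perm.extendDomain_apply_not_subtype _ _ hxp
  have hσct : σ.cycleType = (if a = 2 then A.erase a else (a - 1) ::ₘ A.erase a) := by
    rw [hσdef, Equiv.Perm.cycleType_extendDomain, hα']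
  have hτct : τ.cycleType = B := by
    rw [hτdef, Equiv.Perm.cycleType_extendDomain, hβ']
  have hAsum : A.sum = a + (A.erase a).sum := by
    conv_lhs => rw [← Multiset.cons_erase ha]
    rw [Multiset.sum_cons]
  -- find y and establish cycleType of α := σ * swap x y
  have hmain : ∃ y : Fin (n + 1), y ≠ x ∧ (σ * Equiv.swap x y).cycleType = A := by
    by_cases h2 : a = 2
    · -- need a fixed point y ≠ x of σ
      have hcard : σ.support.card = (A.erase a).sum := by
        rw [← Equiv.Perm.sum_cycleType, hσct, if_pos h2]
      have hlt : (insert x σ.support).card < Fintype.card (Fin (n + 1)) := by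
        have h1 := Finset.card_insert_le x σ.support
        have : Fintype.card (Fin (n + 1)) = n + 1 := Fintype.card_fin _
        omega
      obtain ⟨y, hy⟩ : ∃ y, y ∉ insert x σ.support := by
        have hne : ((insert x σ.support)ᶜ : Finset (Fin (n + 1))).Nonempty := by
          rw [← Finset.card_pos, Finset.card_compl]
          omega
        obtain ⟨y, hy⟩ := hne
        exact ⟨y, Finset.mem_compl.mp hy⟩
      rw [Finset.mem_insert] at hy
      push_neg at hy
      obtain ⟨hyx, hys⟩ := hy
      refine ⟨y, hyx, ?_⟩
      rw [cycleType_mul_swap_fixed hσx (Equiv.Perm.notMem_support.mp hys) (Ne.symm hyx),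
        hσct, if_pos h2, ← h2, Multiset.cons_erase ha]
    · -- find a point y in a cycle of σ of length a - 1
      have hmem : a - 1 ∈ σ.cycleType := by
        rw [hσct, if_neg h2]; exact Multiset.mem_cons_self _ _
      rw [Equiv.Perm.cycleType_def, Multiset.mem_map] at hmem
      obtain ⟨c, hcmem, hccard⟩ := hmem
      simp only [Function.comp_apply] at hccard
      have hcmem' : c ∈ σ.cycleFactorsFinset := hcmem
      have hcyc : c.IsCycle := (Equiv.Perm.mem_cycleFactorsFinset_iff.mp hcmem').1
      obtain ⟨y, hyc⟩ := hcyc.nonempty_support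
      have hσy : σ y ≠ y := by
        rw [← (Equiv.Perm.mem_cycleFactorsFinset_iff.mp hcmem').2 y hyc]
        exact Equiv.Perm.mem_support.mp hyc
      have hyx : y ≠ x := by
        intro h
        rw [h] at hσy
        exact hσy hσx
      have hcy : σ.cycleOf y = c := (Equiv.Perm.cycle_is_cycleOf hyc hcmem').symm
      obtain ⟨_, hct⟩ := cycleType_mul_swap_moved hσx hσy
      refine ⟨y, hyx, ?_⟩
      rw [hct, hcy, hccard, hσct, if_neg h2, Multiset.erase_cons_head]
      have : a - 1 + 1 = a := by omega
      rw [this, Multiset.cons_erase ha]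
  obtain ⟨y, hyx, hαct⟩ := hmain
  refine ⟨σ * Equiv.swap x y, τ, hαct, hτct, ?_⟩
  -- rewrite the product: σ * swap x y * τ = (σ * τ) * swap x (τ⁻¹ y)
  have hswap : Equiv.swap x y * τ = τ * Equiv.swap x (τ⁻¹ y) := by
    rw [Equiv.mul_swap_eq_swap_mul, hτx, show τ (τ⁻¹ y) = y from Equiv.apply_symm_apply τ y]
  have hprod : (σ * Equiv.swap x y) * τ = (σ * τ) * Equiv.swap x (τ⁻¹ y) := by
    rw [mul_assoc, hswap, ← mul_assoc]
  have hστx : (σ * τ) x = x := by rw [Equiv.Perm.mul_apply, hτx, hσx]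
  have hwx : τ⁻¹ y ≠ x := by
    intro h
    apply hyx
    rw [← show τ (τ⁻¹ y) = y from Equiv.apply_symm_apply τ y, h, hτx]
  have hστct : (σ * τ).cycleType = (α' * β').cycleType := by
    rw [hσdef, hτdef, Equiv.Perm.extendDomain_mul, Equiv.Perm.cycleType_extendDomain]
  have hnus : nus ((σ * Equiv.swap x y) * τ).cycleType = nus (α' * β').cycleType + 1 := by
    rw [hprod]
    by_cases hfix : (σ * τ) (τ⁻¹ y) = τ⁻¹ y
    · rw [nus_swap_fixed hστx hfix (Ne.symm hwx), hστct]
    · rw [nus_swap_moved hστx hfix, hστct]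
  rw [hnus]
  omega

lemma key : ∀ n t : ℕ, ∀ A B : Multiset ℕ, 1 ≤ t → (∀ a ∈ A, 2 ≤ a) → (∀ b ∈ B, 2 ≤ b) →
    A.sum ≤ n → B.sum ≤ n → nus A + nus B + t = n → Goal n t A B := by
  intro n
  induction n using Nat.strong_induction_on with
  | _ n IH =>
    intro t A B ht hA hB hAs hBs hsum
    by_cases hA0 : A = 0
    · subst hA0
      obtain ⟨β, hβ⟩ := (Equiv.Perm.exists_with_cycleType_iff (Fin n)).mpr
        (by rw [Fintype.card_fin]; exact ⟨hBs, hB⟩)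
      refine ⟨1, β, Equiv.Perm.cycleType_one, hβ, ?_⟩
      rw [one_mul, hβ]
      simpa [nus] using hsum
    by_cases hB0 : B = 0
    · subst hB0
      obtain ⟨α, hα⟩ := (Equiv.Perm.exists_with_cycleType_iff (Fin n)).mpr
        (by rw [Fintype.card_fin]; exact ⟨hAs, hA⟩)
      refine ⟨α, 1, hα, Equiv.Perm.cycleType_one, ?_⟩
      rw [mul_one, hα]
      simpa [nus] using hsum
    -- both nonempty
    have hnA : 1 ≤ nus A := one_le_nus hA hA0
    have hnB : 1 ≤ nus B := one_le_nus hB hB0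
    obtain ⟨m, rfl⟩ : ∃ m, n = m + 1 := ⟨n - 1, by omega⟩
    obtain ⟨a, ha⟩ := Multiset.exists_mem_of_ne_zero hA0
    obtain ⟨b, hb⟩ := Multiset.exists_mem_of_ne_zero hB0
    have ha2 : 2 ≤ a := hA a ha
    have hb2 : 2 ≤ b := hB b hb
    -- helper: reduce A by decreasing a
    have reduce : ∀ A' B' : Multiset ℕ, (∀ x ∈ A', 2 ≤ x) → (∀ x ∈ B', 2 ≤ x) →
        A'.sum ≤ m + 1 → B'.sum ≤ m → nus A' + nus B' + t = m + 1 →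
        ∀ a' ∈ A', 2 ≤ a' → Goal (m + 1) t A' B' := by
      intro A' B' hA' hB' hA's hB's hsum' a' ha' ha'2
      have hAsum : A'.sum = a' + (A'.erase a').sum := by
        conv_lhs => rw [← Multiset.cons_erase ha']
        rw [Multiset.sum_cons]
      have hnusA : nus A' = (a' - 1) + nus (A'.erase a') := by
        conv_lhs => rw [← Multiset.cons_erase ha']
        simp [nus]
      apply step ha' ha'2 hA's
      by_cases h2 : a' = 2
      · rw [if_pos h2]
        apply IH m (by omega) t _ _ ht
          (fun x hx => hA' x (Multiset.mem_of_mem_erase hx)) hB'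
          (by omega) hB's (by omega)
      · rw [if_neg h2]
        refine IH m (by omega) t _ _ ht ?_ hB' ?_ hB's ?_
        · intro x hx
          rcases Multiset.mem_cons.mp hx with rfl | hx
          · omega
          · exact hA' x (Multiset.mem_of_mem_erase hx)
        · rw [Multiset.sum_cons]; omega
        · have : nus ((a' - 1) ::ₘ A'.erase a') = (a' - 1 - 1) + nus (A'.erase a') := by
            simp [nus]
          omega
    by_cases hBs' : B.sum ≤ m
    · exact reduce A B hA hB hAs hBs' hsum a ha ha2
    · by_cases hAs' : A.sum ≤ m
      · exact (reduce B A hB hA hBs hAs' (by omega) b hb hb2).symm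
      · -- contradiction: A.sum = B.sum = m+1, all parts ≥ 2
        exfalso
        have hAcard := nus_add_card (A := A) (fun x hx => by have := hA x hx; omega)
        have hBcard := nus_add_card (A := B) (fun x hx => by have := hB x hx; omega)
        have hA2 : Multiset.card A • 2 ≤ A.sum := Multiset.card_nsmul_le_sum hA
        have hB2 : Multiset.card B • 2 ≤ B.sum := Multiset.card_nsmul_le_sum hB
        simp only [smul_eq_mul] at hA2 hB2
        omega
end Stmt1Aux
namespace Stmt1Aux

lemma permDefect_eq_nus {d : ℕ} (σ : Equiv.Perm (Fin d)) :
    permDefect σ = nus σ.cycleType := by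
  unfold permDefect cycleStructure nus
  rw [Multiset.map_add, Multiset.sum_add, Multiset.map_replicate]
  simp

lemma realizes_of_cycleType {d : ℕ} (D : Nat.Partition d) (σ : Equiv.Perm (Fin d))
    (h : σ.cycleType = D.parts.filter (fun x => 2 ≤ x)) : Realizes σ D := by
  classical
  have hsplit : D.parts.filter (fun x => 2 ≤ x) + D.parts.filter (fun x => ¬ 2 ≤ x)
      = D.parts := Multiset.filter_add_not _ _
  have hrep : D.parts.filter (fun x => ¬ 2 ≤ x)
      = Multiset.replicate (Multiset.card (D.parts.filter (fun x => ¬ 2 ≤ x))) 1 := by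
    rw [Multiset.eq_replicate_card]
    intro x hx
    rw [Multiset.mem_filter] at hx
    have := D.parts_pos hx.1
    omega
  have hsum : (D.parts.filter (fun x => 2 ≤ x)).sum
      + Multiset.card (D.parts.filter (fun x => ¬ 2 ≤ x)) = d := by
    have h1 := D.parts_sum
    rw [← hsplit, Multiset.sum_add] at h1
    rw [hrep, Multiset.sum_replicate, smul_eq_mul, mul_one] at h1
    omega
  unfold Realizes cycleStructure
  rw [h]
  have hd : d - (D.parts.filter (fun x => 2 ≤ x)).sum
      = Multiset.card (D.parts.filter (fun x => ¬ 2 ≤ x)) := by omega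
  rw [hd, ← hrep, hsplit]

lemma defect_eq_nus {d : ℕ} (D : Nat.Partition d) :
    defect D = nus (D.parts.filter (fun x => 2 ≤ x)) := by
  classical
  have hsplit : D.parts.filter (fun x => 2 ≤ x) + D.parts.filter (fun x => ¬ 2 ≤ x)
      = D.parts := Multiset.filter_add_not _ _
  unfold defect nus
  conv_lhs => rw [← hsplit]
  rw [Multiset.map_add, Multiset.sum_add]
  have : ((D.parts.filter (fun x => ¬ 2 ≤ x)).map (· - 1)).sum = 0 := by
    rw [Multiset.sum_eq_zero]
    intro x hx
    rw [Multiset.mem_map] at hx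
    obtain ⟨y, hy, rfl⟩ := hx
    rw [Multiset.mem_filter] at hy
    omega
  omega

lemma filter_sum_le {d : ℕ} (D : Nat.Partition d) :
    (D.parts.filter (fun x => 2 ≤ x)).sum ≤ d := by
  classical
  have hsplit : D.parts.filter (fun x => 2 ≤ x) + D.parts.filter (fun x => ¬ 2 ≤ x)
      = D.parts := Multiset.filter_add_not _ _
  have h1 := D.parts_sum
  rw [← hsplit, Multiset.sum_add] at h1
  omega

end Stmt1Aux

theorem stmt_1 (d t : ℕ) (ht : 1 ≤ t) (A B : Nat.Partition d)
    (hAB : defect A + defect B = d - t) :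
    ∃ α β : Equiv.Perm (Fin d), Realizes α A ∧ Realizes β B ∧
      permDefect (α * β) = d - t := by
  classical
  open Stmt1Aux in
  have hdA := Stmt1Aux.defect_eq_nus A
  have hdB := Stmt1Aux.defect_eq_nus B
  have hA2 : ∀ x ∈ A.parts.filter (fun x => 2 ≤ x), 2 ≤ x := by
    intro x hx; exact (Multiset.mem_filter.mp hx).2
  have hB2 : ∀ x ∈ B.parts.filter (fun x => 2 ≤ x), 2 ≤ x := by
    intro x hx; exact (Multiset.mem_filter.mp hx).2
  by_cases htd : t ≤ d
  · obtain ⟨α, β, hα, hβ, hn⟩ := Stmt1Aux.key d t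
      (A.parts.filter (fun x => 2 ≤ x)) (B.parts.filter (fun x => 2 ≤ x))
      ht hA2 hB2 (Stmt1Aux.filter_sum_le A) (Stmt1Aux.filter_sum_le B) (by omega)
    refine ⟨α, β, Stmt1Aux.realizes_of_cycleType A α hα,
      Stmt1Aux.realizes_of_cycleType B β hβ, ?_⟩
    rw [Stmt1Aux.permDefect_eq_nus]
    omega
  · have h0 : defect A + defect B = 0 := by omega
    have hA0 : A.parts.filter (fun x => 2 ≤ x) = 0 :=
      Stmt1Aux.nus_eq_zero hA2 (by omega)
    have hB0 : B.parts.filter (fun x => 2 ≤ x) = 0 :=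
      Stmt1Aux.nus_eq_zero hB2 (by omega)
    refine ⟨1, 1, Stmt1Aux.realizes_of_cycleType A 1 (by rw [Equiv.Perm.cycleType_one, hA0]),
      Stmt1Aux.realizes_of_cycleType B 1 (by rw [Equiv.Perm.cycleType_one, hB0]), ?_⟩
    rw [Stmt1Aux.permDefect_eq_nus, mul_one, Equiv.Perm.cycleType_one]
    have : Stmt1Aux.nus 0 = 0 := by simp [Stmt1Aux.nus]
    omega
end

section
/- Let l and d be integers with 1 < l ≤ d such that gcd(l, d) = 1 and l is greater than every divisor of d other than 1 and d. Then every transitive permutation subgroup G of the symmetric group on d elements that contains an l-cycle is primitive. -/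
open Pointwise


/-- A subgroup of `Equiv.Perm (Fin d)` is transitive if its natural action on `Fin d`
is transitive. -/
def IsTransitiveSubgroup {d : ℕ} (G : Subgroup (Equiv.Perm (Fin d))) : Prop :=
  ∀ x y : Fin d, ∃ g ∈ G, g x = y

/-- A subgroup of `Equiv.Perm (Fin d)` is primitive if it is transitive and every block
of its natural action on `Fin d` is trivial. -/
def IsPrimitiveSubgroup {d : ℕ} (G : Subgroup (Equiv.Perm (Fin d))) : Prop :=
  IsTransitiveSubgroup G ∧
    ∀ B : Set (Fin d), MulAction.IsBlock G B → MulAction.IsTrivialBlock B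

lemma subgroup_smul_set_eq {d : ℕ} {G : Subgroup (Equiv.Perm (Fin d))}
    (h : ↥G) (S : Set (Fin d)) : h • S = ⇑(h : Equiv.Perm (Fin d)) '' S := rfl

theorem stmt_4 (l d : ℕ) (hl : 1 < l) (hld : l ≤ d)
    (hcop : Nat.gcd l d = 1)
    (hdiv : ∀ e : ℕ, e ∣ d → e ≠ 1 → e ≠ d → e < l)
    (G : Subgroup (Equiv.Perm (Fin d)))
    (htrans : IsTransitiveSubgroup G)
    (hcycle : ∃ σ ∈ G, σ.IsCycle ∧ σ.support.card = l) :
    IsPrimitiveSubgroup G := by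
  haveI : MulAction.IsPretransitive G (Fin d) := by
    constructor
    intro x y
    obtain ⟨g, hg, hgx⟩ := htrans x y
    exact ⟨⟨g, hg⟩, hgx⟩
  refine ⟨htrans, ?_⟩
  intro B hB
  by_contra hcontra
  rw [MulAction.IsTrivialBlock, not_or] at hcontra
  obtain ⟨hns, hnuniv⟩ := hcontra
  rw [Set.not_subsingleton_iff] at hns
  have hBfin : B.Finite := Set.toFinite B
  set b := B.ncard with hbdef
  have hb2 : 2 ≤ b := by
    obtain ⟨u, hu, v, hv, huv⟩ := hns
    have : 1 < b := (Set.one_lt_ncard hBfin).mpr ⟨u, hu, v, hv, huv⟩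
    omega
  obtain ⟨σ, hσG, hcyc, hcard⟩ := hcycle
  have hbd : b ∣ d := by
    have := hB.ncard_dvd_card (X := Fin d) hns.nonempty
    simpa using this
  have hbned : b ≠ d := by
    intro hbd'
    apply hnuniv
    apply Set.eq_of_subset_of_ncard_le (Set.subset_univ B)
    rw [Set.ncard_univ]
    simp [← hbdef, hbd']
  have hbl : b < l := hdiv b hbd (by omega) hbned
  -- pick a point in the support of σ
  have hsupp_ne : σ.support.Nonempty := by
    rw [← Finset.card_pos, hcard]; omega
  obtain ⟨x, hx⟩ := hsupp_ne
  obtain ⟨b0, hb0⟩ := hns.nonempty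
  obtain ⟨g, hgG, hgx⟩ := htrans b0 x
  set Λ : Set (Fin d) := (⟨g, hgG⟩ : G) • B with hΛdef
  have hΛblock : MulAction.IsBlock G Λ := hB.translate _
  have hxΛ : x ∈ Λ := ⟨b0, hb0, hgx⟩
  have hΛcard : Λ.ncard = b := by
    rw [hΛdef, subgroup_smul_set_eq, Set.ncard_image_of_injective _ (Equiv.injective _)]
  set π : ↥G := ⟨σ, hσG⟩ with hπdef
  have hπpow : ∀ i : ℕ, ((π ^ i : ↥G) : Equiv.Perm (Fin d)) = σ ^ i := by
    intro i; simp [hπdef]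
  rcases hΛblock.smul_eq_or_disjoint π with hfix | hdisj
  · -- σ fixes Λ, so the whole support lies in Λ : contradiction as l > b
    have hpow : ∀ i : ℕ, (σ ^ i) x ∈ Λ := by
      intro i
      induction i with
      | zero => simpa using hxΛ
      | succ n ih =>
        have : σ ((σ ^ n) x) ∈ π • Λ := ⟨(σ ^ n) x, ih, rfl⟩
        rw [hfix] at this
        simpa [pow_succ', Equiv.Perm.mul_apply] using this
    have hsub : (σ.support : Set (Fin d)) ⊆ Λ := by
      intro y hy
      obtain ⟨i, hi⟩ := hcyc.exists_pow_eq (Equiv.Perm.mem_support.mp hx)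
        (Equiv.Perm.mem_support.mp (by simpa using hy))
      rw [← hi]; exact hpow i
    have : l ≤ b := by
      calc l = (σ.support : Set (Fin d)).ncard := by rw [Set.ncard_coe_finset, hcard]
        _ ≤ Λ.ncard := Set.ncard_le_ncard hsub (Set.toFinite Λ)
        _ = b := hΛcard
    omega
  · -- Λ is disjoint from σ • Λ, hence Λ ⊆ support σ
    have hΛsupp : Λ ⊆ (σ.support : Set (Fin d)) := by
      intro y hy
      by_contra hy'
      have hfy : σ y = y := by
        simpa [Equiv.Perm.mem_support] using hy'
      have : y ∈ π • Λ := ⟨y, hy, hfy⟩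
      exact Set.disjoint_left.mp hdisj this hy
    -- the translates of Λ by powers of σ partition the support, so b ∣ l
    classical
    set Λ' : Finset (Fin d) := hBfin.toFinset.image g with hΛ'def
    have hΛ'coe : (Λ' : Set (Fin d)) = Λ := by
      rw [hΛ'def, Finset.coe_image, Set.Finite.coe_toFinset, hΛdef, subgroup_smul_set_eq]
    have hΛ'card : Λ'.card = b := by
      rw [← Set.ncard_coe_finset, hΛ'coe, hΛcard]
    set T : Finset (Finset (Fin d)) :=
      (Finset.range l).image (fun i => Λ'.image (⇑(σ ^ i))) with hTdef
    have hcoe_t : ∀ i : ℕ, ((Λ'.image (⇑(σ ^ i)) : Finset (Fin d)) : Set (Fin d))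
        = (π ^ i : ↥G) • Λ := by
      intro i
      rw [Finset.coe_image, hΛ'coe, subgroup_smul_set_eq, hπpow]
    have hcard_t : ∀ t ∈ T, t.card = b := by
      intro t ht
      obtain ⟨i, _, rfl⟩ := Finset.mem_image.mp ht
      rw [Finset.card_image_of_injective _ (Equiv.injective _), hΛ'card]
    have horder : orderOf σ = l := by rw [hcyc.orderOf, hcard]
    have hbiUnion : T.biUnion (fun t => t) = σ.support := by
      apply Finset.Subset.antisymm
      · intro y hy
        obtain ⟨t, ht, hyt⟩ := Finset.mem_biUnion.mp hy
        obtain ⟨i, _, rfl⟩ := Finset.mem_image.mp ht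
        obtain ⟨z, hz, rfl⟩ := Finset.mem_image.mp hyt
        have hzsupp : z ∈ σ.support := hΛsupp (by rw [← hΛ'coe]; exact hz)
        exact Equiv.Perm.pow_apply_mem_support.mpr hzsupp
      · intro y hy
        obtain ⟨i, hi⟩ := hcyc.exists_pow_eq (Equiv.Perm.mem_support.mp hx)
          (Equiv.Perm.mem_support.mp hy)
        have hxΛ' : x ∈ Λ' := by
          rw [← Finset.mem_coe, hΛ'coe]; exact hxΛ
        refine Finset.mem_biUnion.mpr ⟨Λ'.image (⇑(σ ^ (i % l))), ?_, ?_⟩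
        · exact Finset.mem_image.mpr ⟨i % l, Finset.mem_range.mpr (Nat.mod_lt _ (by omega)), rfl⟩
        · refine Finset.mem_image.mpr ⟨x, hxΛ', ?_⟩
          rw [← horder]
          rw [pow_mod_orderOf, hi]
    have hdisjT : ∀ t₁ ∈ T, ∀ t₂ ∈ T, t₁ ≠ t₂ → Disjoint t₁ t₂ := by
      intro t₁ ht₁ t₂ ht₂ hne
      obtain ⟨i, _, rfl⟩ := Finset.mem_image.mp ht₁
      obtain ⟨j, _, rfl⟩ := Finset.mem_image.mp ht₂
      rw [← Finset.disjoint_coe, hcoe_t, hcoe_t]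
      apply hΛblock
      intro h
      apply hne
      apply Finset.coe_injective
      rw [hcoe_t, hcoe_t, h]
    have hcount : l = T.card * b := by
      rw [← hcard, ← hbiUnion, Finset.card_biUnion hdisjT]
      rw [Finset.sum_congr rfl hcard_t]
      simp [Finset.sum_const, mul_comm]
    have hbl' : b ∣ l := ⟨T.card, by rw [hcount, mul_comm]⟩
    have : b ∣ 1 := hcop ▸ Nat.dvd_gcd hbl' hbd
    rw [Nat.dvd_one] at this
    omega
end

section
/- Let d be an odd integer with d ≥ 5. Then every transitive permutation subgroup G of the symmetric group on d elements that contains a (d − 2)-cycle is primitive. -/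
open scoped Pointwise in
theorem stmt_5 (d : ℕ) (hodd : Odd d) (hd : 5 ≤ d)
    (G : Subgroup (Equiv.Perm (Fin d)))
    (htrans : IsTransitiveSubgroup G)
    (hcycle : ∃ σ ∈ G, σ.IsCycle ∧ σ.support.card = d - 2) :
    IsPrimitiveSubgroup G := by
  obtain ⟨σ, hσG, hcyc, hcard⟩ := hcycle
  have hpre : MulAction.IsPretransitive G (Fin d) := by
    constructor
    intro x y
    obtain ⟨g, hg, h⟩ := htrans x y
    exact ⟨⟨g, hg⟩, h⟩
  refine ⟨htrans, fun B hB => ?_⟩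
  by_contra hnt
  rw [MulAction.IsTrivialBlock] at hnt
  push_neg at hnt
  obtain ⟨hns, hne⟩ := hnt
  change B.Nontrivial at hns
  -- basic cardinality facts
  have h2 : 2 ≤ B.ncard := by
    rw [show (2:ℕ) = 1 + 1 by rfl, Nat.add_one_le_iff, Set.one_lt_ncard]
    obtain ⟨a, ha, b, hb, hab⟩ := hns
    exact ⟨a, ha, b, hb, hab⟩
  have hdvd : B.ncard ∣ d := by
    have := hB.ncard_dvd_card (hns.nonempty)
    simpa using this
  have hoddb : Odd B.ncard := by
    rcases Nat.even_or_odd B.ncard with he | ho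
    · exfalso
      have : (2:ℕ) ∣ d := dvd_trans he.two_dvd hdvd
      rw [Nat.not_even_iff_odd.symm.eq] at hodd
      exact hodd (even_iff_two_dvd.mpr this)
    · exact ho
  have h3 : 3 ≤ B.ncard := by
    obtain ⟨k, hk⟩ := hoddb
    omega
  have hbd : B.ncard ≠ d := by
    intro h
    apply hne
    refine Set.eq_of_subset_of_ncard_le (Set.subset_univ B) ?_
    rw [Set.ncard_univ]
    simp [h]
  have h2b : 2 * B.ncard ≤ d := by
    obtain ⟨k, hk⟩ := hdvd
    have hk2 : 2 ≤ k := by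
      rcases Nat.lt_or_ge k 2 with h | h
      · interval_cases k <;> omega
      · exact h
    calc 2 * B.ncard ≤ k * B.ncard := Nat.mul_le_mul_right _ hk2
      _ = d := by rw [mul_comm]; exact hk.symm
  -- a fixed point of σ
  have hfix : ∃ f : Fin d, σ f = f := by
    by_contra h
    push_neg at h
    have : σ.support = Finset.univ := by
      ext x; simp [Equiv.Perm.mem_support, h x]
    rw [this, Finset.card_univ, Fintype.card_fin] at hcard
    omega
  obtain ⟨f, hf⟩ := hfix
  -- a translate of B containing f
  obtain ⟨b0, hb0⟩ := hns.nonempty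
  obtain ⟨g, hgG, hgb0⟩ := htrans b0 f
  set gG : G := ⟨g, hgG⟩
  set C : Set (Fin d) := gG • B with hC
  have hfC : f ∈ C := ⟨b0, hb0, hgb0⟩
  have hBC : MulAction.IsBlock G C := hB.translate gG
  have hCcard : C.ncard = B.ncard := Set.ncard_smul_set gG B
  set σG : G := ⟨σ, hσG⟩
  have hstab : σG ∈ MulAction.stabilizer G C := by
    rw [MulAction.mem_stabilizer_iff]
    exact hBC.smul_eq_of_mem hfC (by simpa [σG, Subgroup.smul_def, Equiv.Perm.smul_def, hf] using hfC)
  -- C meets the support of σ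
  have hmeet : ∃ x ∈ C, x ∈ σ.support := by
    by_contra h
    push_neg at h
    have hsub : C ⊆ ↑(σ.supportᶜ) := by
      intro x hx
      simp only [Finset.coe_compl, Set.mem_compl_iff, Finset.mem_coe]
      exact h x hx
    have hle : C.ncard ≤ (↑(σ.supportᶜ) : Set (Fin d)).ncard :=
      Set.ncard_le_ncard hsub (Set.toFinite _)
    rw [Set.ncard_coe_finset, Finset.card_compl, Fintype.card_fin, hcard] at hle
    omega
  obtain ⟨x, hxC, hxs⟩ := hmeet
  -- the support of σ is contained in C
  have hsupp : ↑σ.support ⊆ C := by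
    intro y hy
    rw [Finset.mem_coe, Equiv.Perm.mem_support] at hy
    rw [Equiv.Perm.mem_support] at hxs
    obtain ⟨i, hi⟩ := hcyc.sameCycle hxs hy
    have hzs : σG ^ i ∈ MulAction.stabilizer G C := zpow_mem hstab i
    rw [MulAction.mem_stabilizer_iff] at hzs
    have : (σG ^ i) • x ∈ C := hzs ▸ Set.smul_mem_smul_set hxC
    have hcoe : ((σG ^ i : G) : Equiv.Perm (Fin d)) = σ ^ i := by
      simp [σG]
    rw [Subgroup.smul_def, Equiv.Perm.smul_def, hcoe, hi] at this
    exact this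
  have hge : d - 2 ≤ C.ncard := by
    have := Set.ncard_le_ncard hsupp (Set.toFinite _)
    rwa [Set.ncard_coe_finset, hcard] at this
  omega
end

section
/- Let n ≥ 2 and let σ be an even permutation of a set Ω of n elements. Then σ can be written as a product σ = γδ of two n-cycles γ and δ (i.e. two cycles of length n on Ω). -/
open Equiv Equiv.Perm Finset

set_option linter.unusedSectionVars false
set_option maxHeartbeats 1000000

section Aux

variable {Ω : Type*} [Fintype Ω] [DecidableEq Ω]

private lemma isCycle_ofSubtype' {p : Ω → Prop} [DecidablePred p] {g : Perm (Subtype p)}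
    (hg : g.IsCycle) : (ofSubtype g).IsCycle := hg.extendDomain (Equiv.refl _)

private lemma map_univ_subtype' (p : Ω → Prop) [DecidablePred p] :
    (Finset.univ.map (Function.Embedding.subtype p)) = Finset.univ.filter p := by
  ext y; simp

private lemma insL' {f : Perm Ω} (hf : f.IsCycle) {x e : Ω}
    (hx : f x = x) (he : e ∈ f.support) :
    (Equiv.swap x e * f).IsCycle ∧ (Equiv.swap x e * f).support = insert x f.support := by
  classical
  have hfe : f e ≠ e := mem_support.mp he
  have hcyc : f.cycleOf e = f := hf.cycleOf_eq hfe
  have hnd : (f.toList e).Nodup := Equiv.Perm.nodup_toList f e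
  have hlen : 2 ≤ (f.toList e).length := two_le_length_toList_iff_mem_support.mpr he
  have hform : (f.toList e).formPerm = f := by rw [formPerm_toList, hcyc]
  have hsupp : f.support = (f.toList e).toFinset := by
    have h1 := List.support_formPerm_of_nodup (f.toList e) hnd (fun z hz => by
      apply_fun List.length at hz
      rw [List.length_singleton] at hz; omega)
    rw [hform] at h1; exact h1
  have hxl : x ∉ f.toList e := by
    intro hxl
    have hxs : x ∈ f.support := ((mem_toList_iff.mp hxl).1.mem_support_iff).mp he
    exact (mem_support.mp hxs) hx
  have hlen0 : 0 < (f.toList e).length := by omega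
  obtain ⟨t, ht⟩ : ∃ t, f.toList e = e :: t := by
    have h0' : (f.toList e)[0]? = some e := by
      rw [List.getElem?_eq_getElem hlen0]
      simp [Equiv.Perm.toList]
    rcases hl' : f.toList e with _ | ⟨y, t⟩
    · rw [hl'] at hlen; simp at hlen
    · rw [hl'] at h0'; simp at h0'; exact ⟨t, by rw [h0']⟩
  have hkey : Equiv.swap x e * f = (x :: f.toList e).formPerm := by
    rw [ht, List.formPerm_cons_cons, ← ht, hform]
  have hnd2 : (x :: f.toList e).Nodup := List.nodup_cons.mpr ⟨hxl, hnd⟩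
  constructor
  · rw [hkey]
    exact List.isCycle_formPerm hnd2 (by rw [List.length_cons]; omega)
  · rw [hkey, List.support_formPerm_of_nodup _ hnd2 (fun z hz => by
      apply_fun List.length at hz
      rw [List.length_singleton] at hz; rw [List.length_cons] at hz; omega)]
    rw [List.toFinset_cons, ← hsupp]

private lemma insR' {f : Perm Ω} (hf : f.IsCycle) {x e : Ω}
    (hx : f x = x) (he : e ∈ f.support) :
    (f * Equiv.swap x e).IsCycle ∧ (f * Equiv.swap x e).support = insert x f.support := by
  have hx' : f⁻¹ x = x := by apply f.injective; rw [← Perm.mul_apply, mul_inv_cancel, Perm.one_apply, hx]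
  have h := insL' hf.inv (x := x) (e := e) hx' (by rwa [support_inv])
  have hkey : f * Equiv.swap x e = (Equiv.swap x e * f⁻¹)⁻¹ := by
    rw [mul_inv_rev, swap_inv, inv_inv]
  rw [hkey]
  exact ⟨h.1.inv, by rw [support_inv, h.2, support_inv]⟩

private lemma lift_helper' {p : Ω → Prop} [DecidablePred p]
    (H : ∀ σ' : Perm (Subtype p), Equiv.Perm.sign σ' = 1 →
      ∃ γ' δ' : Perm (Subtype p), γ'.IsCycle ∧ γ'.support.card = Fintype.card (Subtype p) ∧
        δ'.IsCycle ∧ δ'.support.card = Fintype.card (Subtype p) ∧ σ' = γ' * δ')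
    {σ2 : Perm Ω} (hfix : ∀ y, ¬ p y → σ2 y = y) (hsign : Equiv.Perm.sign σ2 = 1) :
    ∃ Γ Δ : Perm Ω, Γ.IsCycle ∧ Δ.IsCycle ∧ Γ.support = Finset.univ.filter p ∧
      Δ.support = Finset.univ.filter p ∧ σ2 = Γ * Δ := by
  have h₁ : ∀ y, p y ↔ p (σ2 y) := by
    intro y
    constructor
    · intro hy
      by_contra hny
      have h2 : σ2 (σ2 y) = σ2 y := hfix _ hny
      have := σ2.injective h2
      rw [this] at hny; exact hny hy
    · intro hy
      by_contra hny
      rw [hfix _ hny] at hy; exact hny hy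
  have h₂ : ∀ y, σ2 y ≠ y → p y := fun y hy => by
    by_contra hny; exact hy (hfix _ hny)
  set σ' := σ2.subtypePerm (fun y => (h₁ y).symm) with hσ'
  have hsign' : Equiv.Perm.sign σ' = 1 := by
    rw [hσ', Equiv.Perm.sign_subtypePerm σ2 (fun y => (h₁ y).symm) h₂, hsign]
  obtain ⟨γ', δ', hγc, hγcard, hδc, hδcard, hmul⟩ := H σ' hsign'
  have hγu : γ'.support = Finset.univ := γ'.support.eq_univ_of_card hγcard
  have hδu : δ'.support = Finset.univ := δ'.support.eq_univ_of_card hδcard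
  refine ⟨ofSubtype γ', ofSubtype δ', isCycle_ofSubtype' hγc, isCycle_ofSubtype' hδc, ?_, ?_, ?_⟩
  · rw [Equiv.Perm.support_ofSubtype, hγu, map_univ_subtype']
  · rw [Equiv.Perm.support_ofSubtype, hδu, map_univ_subtype']
  · rw [← map_mul, ← hmul, hσ', Equiv.Perm.ofSubtype_subtypePerm (fun y => (h₁ y).symm) h₂]

private lemma three_le_card_support' {σ : Perm Ω} (h1 : σ ≠ 1)
    (hs : Equiv.Perm.sign σ = 1) : 3 ≤ σ.support.card := by
  by_contra h
  push_neg at h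
  have h0 : σ.support.card ≠ 0 := by
    rw [Ne, Equiv.Perm.card_support_eq_zero]; exact h1
  have hne1 := σ.card_support_ne_one
  have h2 : σ.support.card = 2 := by omega
  have hsw : σ.IsSwap := Equiv.Perm.card_support_eq_two.mp h2
  rw [hsw.sign_eq] at hs
  exact absurd hs (by decide)

end Aux

section Keys

variable {Ω : Type*} [DecidableEq Ω]

private lemma key4' (Δ : Equiv.Perm Ω) (a1 a2 al m u : Ω)
    (h12 : a1 ≠ a2) (h1l : a1 ≠ al) (h2l : a2 ≠ al)
    (hm1 : m ≠ a1) (hm2 : m ≠ a2)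
    (hu1 : u ≠ a1) (hu2 : u ≠ a2) (hum : u ≠ m) (hlm : al ≠ m)
    (hd1 : Δ a1 = a1) (hd2 : Δ a2 = a2) (hdl : Δ al = m) :
    Equiv.swap a1 m * Equiv.swap a2 u * Equiv.swap a2 a1 * Equiv.swap a1 u * Δ =
      Δ * Equiv.swap a1 al * Equiv.swap a1 a2 := by
  ext y
  simp only [Equiv.Perm.mul_apply]
  by_cases h1 : y = a1
  · subst h1
    simp [Equiv.swap_apply_def, hd1, hd2, hdl, h12, h2l, h1l, hm1, hm2, hu1, hu2, hum,
      h12.symm, h2l.symm, h1l.symm, hm1.symm, hm2.symm, hu1.symm, hu2.symm, hum.symm]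
  by_cases h2 : y = a2
  · subst h2
    simp [Equiv.swap_apply_def, hd1, hd2, hdl, h12, h2l, h1l, hm1, hm2, hu1, hu2, hum,
      h12.symm, h2l.symm, h1l.symm, hm1.symm, hm2.symm, hu1.symm, hu2.symm, hum.symm]
  by_cases hl : y = al
  · subst hl
    simp [Equiv.swap_apply_def, hd1, hd2, hdl, h12, h2l, h1l, hm1, hm2, hu1, hu2, hum, hlm,
      h12.symm, h2l.symm, h1l.symm, hm1.symm, hm2.symm, hu1.symm, hu2.symm, hum.symm, hlm.symm]
  · have hz1 : Δ y ≠ a1 := fun h => h1 (Δ.injective (by rw [h, hd1]))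
    have hz2 : Δ y ≠ a2 := fun h => h2 (Δ.injective (by rw [h, hd2]))
    have hzm : Δ y ≠ m := fun h => hl (Δ.injective (by rw [h, hdl]))
    rw [Equiv.swap_apply_of_ne_of_ne h1 h2, Equiv.swap_apply_of_ne_of_ne h1 hl]
    by_cases hzu : Δ y = u
    · rw [hzu, Equiv.swap_apply_right, Equiv.swap_apply_right, Equiv.swap_apply_left,
        Equiv.swap_apply_of_ne_of_ne hu1 hum]
    · rw [Equiv.swap_apply_of_ne_of_ne hz1 hzu, Equiv.swap_apply_of_ne_of_ne hz2 hz1,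
        Equiv.swap_apply_of_ne_of_ne hz2 hzu, Equiv.swap_apply_of_ne_of_ne hz1 hzm]

private lemma key5' (Δ : Equiv.Perm Ω) (a b c d b' d' : Ω)
    (hab : a ≠ b) (hac : a ≠ c) (had : a ≠ d) (hbc : b ≠ c) (hbd : b ≠ d) (hcd : c ≠ d)
    (hb'a : b' ≠ a) (hb'c : b' ≠ c) (hd'a : d' ≠ a) (hd'c : d' ≠ c) (hb'd' : b' ≠ d')
    (hda : Δ a = a) (hdc : Δ c = c) (hdb : Δ b = b') (hdd : Δ d = d') :
    Equiv.swap a d' * Equiv.swap c d' * Equiv.swap c a * Equiv.swap a b' * Δ =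
      Δ * Equiv.swap c d * Equiv.swap a b := by
  ext y
  simp only [Equiv.Perm.mul_apply]
  by_cases h1 : y = a
  · subst h1
    simp [Equiv.swap_apply_def, hda, hdc, hdb, hdd, hab, hac, had, hbc, hbd, hcd,
      hb'a, hb'c, hd'a, hd'c, hb'd', hab.symm, hac.symm, had.symm, hbc.symm, hbd.symm,
      hcd.symm, hb'a.symm, hb'c.symm, hd'a.symm, hd'c.symm, hb'd'.symm]
  by_cases h2 : y = b
  · subst h2
    simp [Equiv.swap_apply_def, hda, hdc, hdb, hdd, hab, hac, had, hbc, hbd, hcd,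
      hb'a, hb'c, hd'a, hd'c, hb'd', hab.symm, hac.symm, had.symm, hbc.symm, hbd.symm,
      hcd.symm, hb'a.symm, hb'c.symm, hd'a.symm, hd'c.symm, hb'd'.symm]
  by_cases h3 : y = c
  · subst h3
    simp [Equiv.swap_apply_def, hda, hdc, hdb, hdd, hab, hac, had, hbc, hbd, hcd,
      hb'a, hb'c, hd'a, hd'c, hb'd', hab.symm, hac.symm, had.symm, hbc.symm, hbd.symm,
      hcd.symm, hb'a.symm, hb'c.symm, hd'a.symm, hd'c.symm, hb'd'.symm]
  by_cases h4 : y = d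
  · subst h4
    simp [Equiv.swap_apply_def, hda, hdc, hdb, hdd, hab, hac, had, hbc, hbd, hcd,
      hb'a, hb'c, hd'a, hd'c, hb'd', hab.symm, hac.symm, had.symm, hbc.symm, hbd.symm,
      hcd.symm, hb'a.symm, hb'c.symm, hd'a.symm, hd'c.symm, hb'd'.symm]
  · have hza : Δ y ≠ a := fun h => h1 (Δ.injective (by rw [h, hda]))
    have hzc : Δ y ≠ c := fun h => h3 (Δ.injective (by rw [h, hdc]))
    have hzb' : Δ y ≠ b' := fun h => h2 (Δ.injective (by rw [h, hdb]))
    have hzd' : Δ y ≠ d' := fun h => h4 (Δ.injective (by rw [h, hdd]))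
    rw [Equiv.swap_apply_of_ne_of_ne h1 h2, Equiv.swap_apply_of_ne_of_ne h3 h4,
      Equiv.swap_apply_of_ne_of_ne hza hzb', Equiv.swap_apply_of_ne_of_ne hzc hza,
      Equiv.swap_apply_of_ne_of_ne hzc hzd', Equiv.swap_apply_of_ne_of_ne hza hzd']

end Keys

universe u

private theorem aux_two_cycles : ∀ n : ℕ, 2 ≤ n → ∀ (Ω : Type u) (_ : Fintype Ω)
    (_ : DecidableEq Ω), Fintype.card Ω = n → ∀ σ : Equiv.Perm Ω, Equiv.Perm.sign σ = 1 →
    ∃ γ δ : Equiv.Perm Ω, γ.IsCycle ∧ γ.support.card = n ∧ δ.IsCycle ∧ δ.support.card = n ∧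
      σ = γ * δ := by
  intro n
  induction n using Nat.strong_induction_on with
  | _ n ih =>
  intro hn Ω instF instD hcard σ hsign
  -- Case 1 : σ = 1
  by_cases hσ1 : σ = 1
  · obtain ⟨γ0, hc, hs⟩ : ∃ γ0 : Equiv.Perm Ω, γ0.IsCycle ∧ γ0.support = Finset.univ := by
      refine ⟨(Finset.univ (α := Ω)).toList.formPerm, ?_, ?_⟩
      · exact List.isCycle_formPerm (Finset.nodup_toList _)
          (by rw [Finset.length_toList, card_univ, hcard]; omega)
      · rw [List.support_formPerm_of_nodup _ (Finset.nodup_toList _) (fun z hz => by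
          apply_fun List.length at hz
          rw [List.length_singleton, Finset.length_toList, card_univ, hcard] at hz; omega),
          Finset.toList_toFinset]
    exact ⟨γ0, γ0⁻¹, hc, by rw [hs, card_univ, hcard], hc.inv,
      by rw [support_inv, hs, card_univ, hcard], by simp [hσ1]⟩
  have hsupp3 : 3 ≤ σ.support.card := three_le_card_support' hσ1 hsign
  have hn3 : 3 ≤ n := le_trans hsupp3 (by rw [← hcard, ← card_univ]; exact card_le_univ _)
  -- Case 2 : σ has a fixed point
  by_cases hfp : ∃ x, σ x = x
  · obtain ⟨x, hx⟩ := hfp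
    set p : Ω → Prop := fun y => y ≠ x with hp
    have hcardp : Fintype.card (Subtype p) = n - 1 := by
      rw [Fintype.card_subtype]
      have he : Finset.univ.filter p = Finset.univ.erase x := by
        ext y; simp [hp, Finset.mem_erase, and_comm]
      rw [he, Finset.card_erase_of_mem (Finset.mem_univ x), card_univ, hcard]
    have H : ∀ σ' : Equiv.Perm (Subtype p), Equiv.Perm.sign σ' = 1 →
        ∃ γ' δ' : Equiv.Perm (Subtype p), γ'.IsCycle ∧
          γ'.support.card = Fintype.card (Subtype p) ∧ δ'.IsCycle ∧
          δ'.support.card = Fintype.card (Subtype p) ∧ σ' = γ' * δ' := by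
      intro σ' hσ'
      obtain ⟨γ', δ', h1, h2, h3, h4, h5⟩ :=
        ih (n - 1) (by omega) (by omega) (Subtype p) _ _ hcardp σ' hσ'
      exact ⟨γ', δ', h1, by rw [hcardp]; exact h2, h3, by rw [hcardp]; exact h4, h5⟩
    obtain ⟨Γ, Δ, hΓc, hΔc, hΓs, hΔs, hmul⟩ := lift_helper' H
      (σ2 := σ) (fun y hy => by
        have : y = x := by simpa [hp] using hy
        rw [this, hx]) hsign
    have hfilne : (Finset.univ.filter p).Nonempty := by
      rw [← Finset.card_pos, ← Fintype.card_subtype, hcardp]; omega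
    obtain ⟨e, he⟩ := hfilne
    have hΓx : Γ x = x := by
      apply notMem_support.mp; rw [hΓs]; simp [hp]
    have hΔx : Δ x = x := by
      apply notMem_support.mp; rw [hΔs]; simp [hp]
    have g1 := insR' hΓc hΓx (by rw [hΓs]; exact he)
    have g2 := insL' hΔc hΔx (by rw [hΔs]; exact he)
    have huniv : insert x (Finset.univ.filter p) = Finset.univ := by
      ext y; by_cases hy : y = x <;> simp [hp, hy]
    refine ⟨Γ * Equiv.swap x e, Equiv.swap x e * Δ, g1.1, ?_, g2.1, ?_, ?_⟩
    · rw [g1.2, hΓs, huniv, card_univ, hcard]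
    · rw [g2.2, hΔs, huniv, card_univ, hcard]
    · rw [hmul, mul_assoc, ← mul_assoc (Equiv.swap x e), swap_mul_self, one_mul]
  push_neg at hfp
  -- Case 3 : σ is an n-cycle
  by_cases hcyc : σ.IsCycle
  · have hsu : σ.support = Finset.univ := by
      ext y; simp [mem_support, hfp y]
    have hscard : σ.support.card = n := by rw [hsu, card_univ, hcard]
    have hodd : Odd n := by
      rcases Nat.even_or_odd n with hev | hodd
      · exfalso
        have := hcyc.sign
        rw [hscard, hev.neg_one_pow, hsign] at this
        exact absurd this (by decide)
      · exact hodd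
    obtain ⟨t, ht⟩ := hodd
    set k := (n + 1) / 2 with hk
    have h2k : 2 * k = n + 1 := by omega
    have horder : orderOf σ = n := by rw [hcyc.orderOf, hscard]
    have hcop : Nat.Coprime k n := by
      have h1 : Nat.gcd k n ∣ n + 1 := by
        rw [← h2k]; exact Dvd.dvd.mul_left (Nat.gcd_dvd_left k n) 2
      have h2 : Nat.gcd k n ∣ n := Nat.gcd_dvd_right k n
      have h3 := Nat.dvd_sub h1 h2
      rw [show n + 1 - n = 1 from by omega] at h3
      exact Nat.dvd_one.mp h3
    have hcop' : Nat.Coprime k (orderOf σ) := by rwa [horder]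
    have hpowc : (σ ^ k).IsCycle := hcyc.pow_iff.mpr hcop'
    have hpows : (σ ^ k).support = σ.support := support_pow_coprime hcop'
    refine ⟨σ ^ k, σ ^ k, hpowc, by rw [hpows, hscard], hpowc, by rw [hpows, hscard], ?_⟩
    have hord1 : σ ^ n = 1 := by rw [← horder]; exact pow_orderOf_eq_one σ
    rw [← pow_add, show k + k = n + 1 from by omega, pow_succ, hord1, one_mul]
  -- Case 4 : some cycle of length ≥ 3
  by_cases hord : ∃ x, σ (σ x) ≠ x
  · obtain ⟨x, hxx⟩ := hord
    set a1 := x with ha1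
    set a2 := σ x with ha2
    set al := σ⁻¹ x with hal
    have hσal : σ al = a1 := by rw [hal, ← Perm.mul_apply, mul_inv_cancel, Perm.one_apply, ha1]
    have h12 : a1 ≠ a2 := fun h => hfp x h.symm
    have h1l : a1 ≠ al := fun h => hfp a1 (by rw [h, hσal]; exact h)
    have h2l : a2 ≠ al := fun h => hxx (by rw [← h] at hσal; exact hσal)
    have hsign2 : Equiv.Perm.sign (σ * Equiv.swap a1 a2 * Equiv.swap a1 al) = 1 := by
      rw [map_mul, map_mul, hsign, sign_swap h12, sign_swap h1l]; decide
    have hfix : ∀ y, ¬(y ≠ a1 ∧ y ≠ a2) → (σ * Equiv.swap a1 a2 * Equiv.swap a1 al) y = y := by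
      intro y hy
      simp only [ne_eq, not_and, not_not] at hy
      by_cases hy1 : y = a1
      · subst hy1
        simp only [Perm.mul_apply]
        rw [Equiv.swap_apply_left, Equiv.swap_apply_of_ne_of_ne (Ne.symm h1l) (Ne.symm h2l),
          hσal]
      · have hy2 : y = a2 := hy hy1
        subst hy2
        simp only [Perm.mul_apply]
        rw [Equiv.swap_apply_of_ne_of_ne (Ne.symm h12) h2l, Equiv.swap_apply_right, ← ha2]
    have hn4 : 4 ≤ n := by
      by_contra hle
      have hne : n = 3 := by omega
      apply hcyc
      have htriple : ({a1, a2, al} : Finset Ω).card = 3 := by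
        rw [Finset.card_insert_of_notMem (by simp [h12, h1l]),
          Finset.card_insert_of_notMem (by simp [h2l]), Finset.card_singleton]
      have huniv3 : ({a1, a2, al} : Finset Ω) = Finset.univ :=
        Finset.eq_univ_of_card _ (by rw [htriple, hcard, hne])
      refine ⟨x, hfp x, fun b hb => ?_⟩
      have hbmem : b ∈ ({a1, a2, al} : Finset Ω) := by rw [huniv3]; exact Finset.mem_univ b
      simp only [Finset.mem_insert, Finset.mem_singleton] at hbmem
      rcases hbmem with rfl | rfl | rfl
      · exact ⟨0, by simp [ha1]⟩
      · exact ⟨1, by simp [ha2]⟩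
      · exact ⟨-1, by simp [hal]⟩
    have hcardp : Fintype.card {y : Ω // y ≠ a1 ∧ y ≠ a2} = n - 2 := by
      rw [Fintype.card_subtype]
      have he : Finset.univ.filter (fun y : Ω => y ≠ a1 ∧ y ≠ a2) =
          (Finset.univ.erase a1).erase a2 := by
        ext y; simp only [Finset.mem_filter, Finset.mem_univ, true_and, Finset.mem_erase]; tauto
      rw [he, Finset.card_erase_of_mem (by simp [Ne.symm h12]),
        Finset.card_erase_of_mem (Finset.mem_univ _), card_univ, hcard]
      omega
    have H : ∀ σ' : Equiv.Perm {y : Ω // y ≠ a1 ∧ y ≠ a2}, Equiv.Perm.sign σ' = 1 →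
        ∃ γ' δ' : Equiv.Perm {y : Ω // y ≠ a1 ∧ y ≠ a2}, γ'.IsCycle ∧
          γ'.support.card = Fintype.card {y : Ω // y ≠ a1 ∧ y ≠ a2} ∧ δ'.IsCycle ∧
          δ'.support.card = Fintype.card {y : Ω // y ≠ a1 ∧ y ≠ a2} ∧ σ' = γ' * δ' := by
      intro σ' hσ'
      obtain ⟨γ', δ', h1, h2, h3, h4, h5⟩ :=
        ih (n - 2) (by omega) (by omega) _ _ _ hcardp σ' hσ'
      exact ⟨γ', δ', h1, by rw [hcardp]; exact h2, h3, by rw [hcardp]; exact h4, h5⟩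
    obtain ⟨Γ, Δ, hΓc, hΔc, hΓs, hΔs, hmul⟩ := lift_helper' H hfix hsign2
    have hΓ1 : Γ a1 = a1 := notMem_support.mp (by rw [hΓs]; simp)
    have hΓ2 : Γ a2 = a2 := notMem_support.mp (by rw [hΓs]; simp)
    have hΔ1 : Δ a1 = a1 := notMem_support.mp (by rw [hΔs]; simp)
    have hΔ2 : Δ a2 = a2 := notMem_support.mp (by rw [hΔs]; simp)
    set m := Δ al with hmdef
    have hal_supp : al ∈ Δ.support := by
      rw [hΔs]; simp [Ne.symm h1l, Ne.symm h2l]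
    have hlm : al ≠ m := fun h => (mem_support.mp hal_supp) h.symm
    have hm1 : m ≠ a1 := fun h => (Ne.symm h1l) (Δ.injective (h.trans hΔ1.symm))
    have hm2 : m ≠ a2 := fun h => (Ne.symm h2l) (Δ.injective (h.trans hΔ2.symm))
    obtain ⟨u, hu⟩ : ∃ u : Ω, u ∉ ({a1, a2, m} : Finset Ω) := by
      by_contra hc3
      push_neg at hc3
      have hsub : (Finset.univ : Finset Ω) ⊆ {a1, a2, m} := fun z _ => hc3 z
      have hle := Finset.card_le_card hsub
      rw [card_univ, hcard] at hle
      have c1 := Finset.card_insert_le a1 ({a2, m} : Finset Ω)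
      have c2 := Finset.card_insert_le a2 ({m} : Finset Ω)
      rw [Finset.card_singleton] at c2
      omega
    simp only [Finset.mem_insert, Finset.mem_singleton, not_or] at hu
    obtain ⟨hu1, hu2, hum⟩ := hu
    have hmsuppΓ : m ∈ Γ.support := by rw [hΓs]; simp [hm1, hm2]
    have g1 := insR' hΓc hΓ1 hmsuppΓ
    have hga2 : (Γ * Equiv.swap a1 m) a2 = a2 := by
      rw [Perm.mul_apply, Equiv.swap_apply_of_ne_of_ne (Ne.symm h12) (Ne.symm hm2), hΓ2]
    have g2 := insR' g1.1 (e := u) hga2 (by rw [g1.2, hΓs]; simp [hu1, hu2])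
    have d1 := insL' hΔc (e := u) hΔ1 (by rw [hΔs]; simp [hu1, hu2])
    have hda2 : (Equiv.swap a1 u * Δ) a2 = a2 := by
      rw [Perm.mul_apply, hΔ2, Equiv.swap_apply_of_ne_of_ne (Ne.symm h12) (Ne.symm hu2)]
    have d2 := insL' d1.1 hda2 (by rw [d1.2]; exact Finset.mem_insert_self _ _)
    have huniv : insert a2 (insert a1 (Finset.univ.filter (fun y : Ω => y ≠ a1 ∧ y ≠ a2))) =
        Finset.univ := by
      ext z
      by_cases hz1 : z = a1
      · simp [hz1]
      by_cases hz2 : z = a2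
      · simp [hz2]
      · simp [hz1, hz2]
    have hσeq : σ = Γ * Δ * Equiv.swap a1 al * Equiv.swap a1 a2 := by
      rw [← hmul, mul_assoc (σ * Equiv.swap a1 a2), swap_mul_self, mul_one, mul_assoc,
        swap_mul_self, mul_one]
    have hk := key4' Δ a1 a2 al m u h12 h1l h2l hm1 hm2 hu1 hu2 hum hlm hΔ1 hΔ2 hmdef.symm
    refine ⟨Γ * Equiv.swap a1 m * Equiv.swap a2 u,
      Equiv.swap a2 a1 * (Equiv.swap a1 u * Δ), g2.1, ?_, d2.1, ?_, ?_⟩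
    · rw [g2.2, g1.2, hΓs, huniv, card_univ, hcard]
    · rw [d2.2, d1.2, hΔs, huniv, card_univ, hcard]
    · calc σ = Γ * Δ * Equiv.swap a1 al * Equiv.swap a1 a2 := hσeq
        _ = Γ * (Δ * Equiv.swap a1 al * Equiv.swap a1 a2) := by
            simp only [mul_assoc]
        _ = Γ * (Equiv.swap a1 m * Equiv.swap a2 u * Equiv.swap a2 a1 * Equiv.swap a1 u * Δ) :=
            by rw [hk]
        _ = Γ * Equiv.swap a1 m * Equiv.swap a2 u * (Equiv.swap a2 a1 * (Equiv.swap a1 u * Δ)) :=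
            by simp only [mul_assoc]
  -- Case 5 : fixed-point-free involution
  · push_neg at hord
    obtain ⟨a⟩ : Nonempty Ω := Fintype.card_pos_iff.mp (by omega)
    set b := σ a with hb
    have hab : a ≠ b := fun h => hfp a h.symm
    have hσb : σ b = a := hord a
    obtain ⟨c, hc⟩ : ∃ c : Ω, c ∉ ({a, b} : Finset Ω) := by
      by_contra hc2
      push_neg at hc2
      have hsub : (Finset.univ : Finset Ω) ⊆ {a, b} := fun z _ => hc2 z
      have hle := Finset.card_le_card hsub
      rw [card_univ, hcard] at hle
      have c1 := Finset.card_insert_le a ({b} : Finset Ω)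
      rw [Finset.card_singleton] at c1
      omega
    simp only [Finset.mem_insert, Finset.mem_singleton, not_or] at hc
    obtain ⟨hca, hcb⟩ := hc
    set d := σ c with hd
    have hσd : σ d = c := hord c
    have hcd : c ≠ d := fun h => hfp c h.symm
    have had : a ≠ d := fun h => hcb (σ.injective (hσb.trans (h.trans hd))).symm
    have hbd : b ≠ d := fun h => hca (σ.injective ((hb.symm.trans h).trans hd)).symm
    have hac : a ≠ c := Ne.symm hca
    have hbc : b ≠ c := Ne.symm hcb
    have hsign2 : Equiv.Perm.sign (σ * Equiv.swap a b * Equiv.swap c d) = 1 := by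
      rw [map_mul, map_mul, hsign, sign_swap hab, sign_swap hcd]; decide
    have hfix : ∀ y, ¬(y ≠ a ∧ y ≠ c) → (σ * Equiv.swap a b * Equiv.swap c d) y = y := by
      intro y hy
      simp only [ne_eq, not_and, not_not] at hy
      by_cases hy1 : y = a
      · subst hy1
        simp only [Perm.mul_apply]
        rw [Equiv.swap_apply_of_ne_of_ne hac had, Equiv.swap_apply_left, hσb]
      · have hy2 : y = c := hy hy1
        subst hy2
        simp only [Perm.mul_apply]
        rw [Equiv.swap_apply_left, Equiv.swap_apply_of_ne_of_ne (Ne.symm had) (Ne.symm hbd), hσd]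
    have hn4 : 4 ≤ n := by
      have hquad : ({a, b, c, d} : Finset Ω).card = 4 := by
        rw [Finset.card_insert_of_notMem (by simp [hab, hac, had]),
          Finset.card_insert_of_notMem (by simp [hbc, hbd]),
          Finset.card_insert_of_notMem (by simp [hcd]), Finset.card_singleton]
      have := Finset.card_le_univ ({a, b, c, d} : Finset Ω)
      rw [hquad, hcard] at this
      exact this
    have hcardp : Fintype.card {y : Ω // y ≠ a ∧ y ≠ c} = n - 2 := by
      rw [Fintype.card_subtype]
      have he : Finset.univ.filter (fun y : Ω => y ≠ a ∧ y ≠ c) =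
          (Finset.univ.erase a).erase c := by
        ext y; simp only [Finset.mem_filter, Finset.mem_univ, true_and, Finset.mem_erase]; tauto
      rw [he, Finset.card_erase_of_mem (by simp [hca]),
        Finset.card_erase_of_mem (Finset.mem_univ _), card_univ, hcard]
      omega
    have H : ∀ σ' : Equiv.Perm {y : Ω // y ≠ a ∧ y ≠ c}, Equiv.Perm.sign σ' = 1 →
        ∃ γ' δ' : Equiv.Perm {y : Ω // y ≠ a ∧ y ≠ c}, γ'.IsCycle ∧
          γ'.support.card = Fintype.card {y : Ω // y ≠ a ∧ y ≠ c} ∧ δ'.IsCycle ∧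
          δ'.support.card = Fintype.card {y : Ω // y ≠ a ∧ y ≠ c} ∧ σ' = γ' * δ' := by
      intro σ' hσ'
      obtain ⟨γ', δ', h1, h2, h3, h4, h5⟩ :=
        ih (n - 2) (by omega) (by omega) _ _ _ hcardp σ' hσ'
      exact ⟨γ', δ', h1, by rw [hcardp]; exact h2, h3, by rw [hcardp]; exact h4, h5⟩
    obtain ⟨Γ, Δ, hΓcy, hΔcy, hΓs, hΔs, hmul⟩ := lift_helper' H hfix hsign2
    have hΓa : Γ a = a := notMem_support.mp (by rw [hΓs]; simp)
    have hΓc0 : Γ c = c := notMem_support.mp (by rw [hΓs]; simp)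
    have hΔa : Δ a = a := notMem_support.mp (by rw [hΔs]; simp)
    have hΔc0 : Δ c = c := notMem_support.mp (by rw [hΔs]; simp)
    set b' := Δ b with hb'
    set d' := Δ d with hd'
    have hb'a : b' ≠ a := fun h => hab (Δ.injective (h.trans hΔa.symm)).symm
    have hb'c : b' ≠ c := fun h => hbc (Δ.injective (h.trans hΔc0.symm))
    have hd'a : d' ≠ a := fun h => had (Δ.injective (h.trans hΔa.symm)).symm
    have hd'c : d' ≠ c := fun h => hcd (Δ.injective (h.trans hΔc0.symm)).symm
    have hb'd' : b' ≠ d' := fun h => hbd (Δ.injective h)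
    have g1 := insR' hΓcy (e := d') hΓa (by rw [hΓs]; simp [hd'a, hd'c])
    have hgc : (Γ * Equiv.swap a d') c = c := by
      rw [Perm.mul_apply, Equiv.swap_apply_of_ne_of_ne hca (Ne.symm hd'c), hΓc0]
    have g2 := insR' g1.1 (e := d') hgc (by rw [g1.2, hΓs]; simp [hd'a, hd'c])
    have d1 := insL' hΔcy (e := b') hΔa (by rw [hΔs]; simp [hb'a, hb'c])
    have hdc : (Equiv.swap a b' * Δ) c = c := by
      rw [Perm.mul_apply, hΔc0, Equiv.swap_apply_of_ne_of_ne hca (Ne.symm hb'c)]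
    have d2 := insL' d1.1 hdc (by rw [d1.2]; exact Finset.mem_insert_self _ _)
    have huniv : insert c (insert a (Finset.univ.filter (fun y : Ω => y ≠ a ∧ y ≠ c))) =
        Finset.univ := by
      ext z
      by_cases hz1 : z = a
      · simp [hz1]
      by_cases hz2 : z = c
      · simp [hz2]
      · simp [hz1, hz2]
    have hσeq : σ = Γ * Δ * Equiv.swap c d * Equiv.swap a b := by
      rw [← hmul, mul_assoc (σ * Equiv.swap a b), swap_mul_self, mul_one, mul_assoc,
        swap_mul_self, mul_one]
    have hk := key5' Δ a b c d b' d' hab hac had hbc hbd hcd hb'a hb'c hd'a hd'c hb'd'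
      hΔa hΔc0 hb'.symm hd'.symm
    refine ⟨Γ * Equiv.swap a d' * Equiv.swap c d',
      Equiv.swap c a * (Equiv.swap a b' * Δ), g2.1, ?_, d2.1, ?_, ?_⟩
    · rw [g2.2, g1.2, hΓs, huniv, card_univ, hcard]
    · rw [d2.2, d1.2, hΔs, huniv, card_univ, hcard]
    · calc σ = Γ * Δ * Equiv.swap c d * Equiv.swap a b := hσeq
        _ = Γ * (Δ * Equiv.swap c d * Equiv.swap a b) := by simp only [mul_assoc]
        _ = Γ * (Equiv.swap a d' * Equiv.swap c d' * Equiv.swap c a * Equiv.swap a b' * Δ) :=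
            by rw [hk]
        _ = Γ * Equiv.swap a d' * Equiv.swap c d' * (Equiv.swap c a * (Equiv.swap a b' * Δ)) :=
            by simp only [mul_assoc]

theorem stmt_15 {Ω : Type*} [Fintype Ω] [DecidableEq Ω] (n : ℕ) (hn : 2 ≤ n)
    (hcard : Fintype.card Ω = n)
    (σ : Equiv.Perm Ω) (heven : Equiv.Perm.sign σ = 1) :
    ∃ γ δ : Equiv.Perm Ω, γ.IsCycle ∧ γ.support.card = n ∧
      δ.IsCycle ∧ δ.support.card = n ∧ σ = γ * δ := by
  exact aux_two_cycles n hn Ω _ _ hcard σ heven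
end
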